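/- Let n ≥ 3, ε ∈ {0,1} and ℓ ≥ 1+ε be integers. Then the number of (n+1)-tuples m = (m_0, …, m_n) of nonnegative integers with m_0 + m_1 + 2(m_2 + ⋯ + m_{n−1}) + m_n = ℓ and m_n ≡ ε (mod 2) equals C(n + ⌊(ℓ−ε)/2⌋, n) + C(n + ⌊(ℓ−1−ε)/2⌋, n), where C(·,·) is the binomial coefficient. (For ε = 0 this is the number of dominant maximal weights of V(ℓΛ_0) over B_n^{(1)}, and for ε = 1 that of V((ℓ−1)Λ_0 + Λ_n).) -/

import Mathlib

open Finset

private lemma sum_ite_three (n : ℕ) (hn : 3 ≤ n) (g : Fin (n + 1) → ℕ) :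
    (∑ i : Fin (n + 1), if (i : ℕ) = 0 ∨ (i : ℕ) = 1 ∨ (i : ℕ) = n then g i else 0)
      = g 0 + g 1 + g (Fin.last n) := by
  have h1 : ((1 : Fin (n + 1)) : ℕ) = 1 := by
    rw [Fin.val_one']; exact Nat.mod_eq_of_lt (by omega)
  rw [← Finset.sum_filter]
  have hset : (Finset.univ.filter fun i : Fin (n + 1) =>
      (i : ℕ) = 0 ∨ (i : ℕ) = 1 ∨ (i : ℕ) = n) = {0, 1, Fin.last n} := by
    ext i
    simp only [Finset.mem_filter, Finset.mem_univ, true_and, Finset.mem_insert,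
      Finset.mem_singleton, Fin.ext_iff, h1, Fin.val_last, Fin.val_zero]
  rw [hset]
  rw [Finset.sum_insert (by
      simp only [Finset.mem_insert, Finset.mem_singleton, Fin.ext_iff, h1, Fin.val_last,
        Fin.val_zero]
      omega),
    Finset.sum_insert (by
      simp only [Finset.mem_singleton, Fin.ext_iff, h1, Fin.val_last]
      omega),
    Finset.sum_singleton, add_assoc]

private lemma card_piAntidiag_fin (n k : ℕ) :
    (Finset.piAntidiag (Finset.univ : Finset (Fin (n + 1))) k).card = (n + k).choose n := by
  rw [← Finset.map_sym_eq_piAntidiag, Finset.card_map, Finset.sym_univ, Finset.card_univ,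
    Sym.card_sym_eq_choose]
  have h : Fintype.card (Fin (n + 1)) + k - 1 = n + k := by rw [Fintype.card_fin]; omega
  rw [h]
  rw [← Nat.choose_symm (Nat.le_add_left k n)]
  congr 1
  omega

private lemma count_parity (n ℓ ε r : ℕ) (hn : 3 ≤ n) (hε : ε ≤ 1) (hr : r ≤ 1)
    (hℓ : ε + r ≤ ℓ) :
    (((Fintype.piFinset fun _ : Fin (n + 1) => Finset.range (ℓ + 1)).filter
        (fun m =>
          ((∑ i : Fin (n + 1),
            (if (i : ℕ) = 0 ∨ (i : ℕ) = 1 ∨ (i : ℕ) = n then 1 else 2) * m i = ℓ)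
          ∧ m (Fin.last n) % 2 = ε) ∧ m 0 % 2 = r)).card)
      = Nat.choose (n + (ℓ - ε - r) / 2) n := by
  have h1 : ((1 : Fin (n + 1)) : ℕ) = 1 := by
    rw [Fin.val_one']; exact Nat.mod_eq_of_lt (by omega)
  have h0 : ((0 : Fin (n + 1)) : ℕ) = 0 := rfl
  have hlast : ((Fin.last n : Fin (n + 1)) : ℕ) = n := Fin.val_last n
  set s := (ℓ - ε - r) % 2 with hs
  set A := (ℓ - ε - r) / 2 with hA
  have hsle : s ≤ 1 := Nat.le_of_lt_succ (Nat.mod_lt _ (by norm_num))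
  rw [← card_piAntidiag_fin n A]
  have key : ∀ m : Fin (n + 1) → ℕ,
      (∑ i : Fin (n + 1), (if (i : ℕ) = 0 ∨ (i : ℕ) = 1 ∨ (i : ℕ) = n then 1 else 2) * m i)
        = 2 * (∑ i : Fin (n + 1),
            if (i : ℕ) = 0 ∨ (i : ℕ) = 1 ∨ (i : ℕ) = n then m i / 2 else m i)
          + (m 0 % 2 + m 1 % 2 + m (Fin.last n) % 2) := by
    intro m
    rw [Finset.mul_sum, ← sum_ite_three n hn (fun i => m i % 2), ← Finset.sum_add_distrib]
    refine Finset.sum_congr rfl fun i _ => ?_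
    by_cases h : (i : ℕ) = 0 ∨ (i : ℕ) = 1 ∨ (i : ℕ) = n <;> split_ifs <;> omega
  refine Finset.card_bij'
    (fun m _ => fun i : Fin (n + 1) =>
      if (i : ℕ) = 0 ∨ (i : ℕ) = 1 ∨ (i : ℕ) = n then m i / 2 else m i)
    (fun x _ => fun i : Fin (n + 1) =>
      if (i : ℕ) = 0 then 2 * x i + r else if (i : ℕ) = 1 then 2 * x i + s
      else if (i : ℕ) = n then 2 * x i + ε else x i) ?_ ?_ ?_ ?_
  · -- forward membership
    intro m hm
    rw [Finset.mem_filter] at hm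
    obtain ⟨hbox, ⟨hsum, hpar⟩, h0r⟩ := hm
    rw [Finset.mem_piAntidiag]
    refine ⟨?_, fun i _ => Finset.mem_univ i⟩
    have hk := key m
    rw [hsum, h0r, hpar] at hk
    have hb : m 1 % 2 < 2 := Nat.mod_lt _ (by norm_num)
    omega
  · -- backward membership
    intro x hx
    rw [Finset.mem_piAntidiag] at hx
    obtain ⟨hxsum, -⟩ := hx
    have hxle : ∀ i : Fin (n + 1), x i ≤ A := by
      intro i
      rw [← hxsum]
      exact Finset.single_le_sum (fun j _ => Nat.zero_le _) (Finset.mem_univ i)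
    rw [Finset.mem_filter]
    refine ⟨?_, ⟨?_, ?_⟩, ?_⟩
    · rw [Fintype.mem_piFinset]
      intro i
      rw [Finset.mem_range]
      have := hxle i
      split_ifs <;> omega
    · -- sum condition
      dsimp only
      have key2 : (∑ i : Fin (n + 1),
          (if (i : ℕ) = 0 ∨ (i : ℕ) = 1 ∨ (i : ℕ) = n then 1 else 2) *
            (if (i : ℕ) = 0 then 2 * x i + r else if (i : ℕ) = 1 then 2 * x i + s
             else if (i : ℕ) = n then 2 * x i + ε else x i))
          = 2 * (∑ i : Fin (n + 1), x i) + (r + s + ε) := by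
        have hg0 : (if ((0 : Fin (n+1)) : ℕ) = 0 then r else
            if ((0 : Fin (n+1)) : ℕ) = 1 then s else ε) = r := by rw [h0]; exact if_pos rfl
        have hg1 : (if ((1 : Fin (n+1)) : ℕ) = 0 then r else
            if ((1 : Fin (n+1)) : ℕ) = 1 then s else ε) = s := by
          rw [h1, if_neg (by omega : ¬(1:ℕ) = 0), if_pos rfl]
        have hgl : (if ((Fin.last n : Fin (n+1)) : ℕ) = 0 then r else
            if ((Fin.last n : Fin (n+1)) : ℕ) = 1 then s else ε) = ε := by
          rw [hlast, if_neg (by omega : ¬n = 0), if_neg (by omega : ¬n = 1)]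
        rw [show r + s + ε = (if ((0 : Fin (n+1)) : ℕ) = 0 then r else
              if ((0 : Fin (n+1)) : ℕ) = 1 then s else ε)
            + (if ((1 : Fin (n+1)) : ℕ) = 0 then r else
              if ((1 : Fin (n+1)) : ℕ) = 1 then s else ε)
            + (if ((Fin.last n : Fin (n+1)) : ℕ) = 0 then r else
              if ((Fin.last n : Fin (n+1)) : ℕ) = 1 then s else ε) by
            rw [hg0, hg1, hgl]]
        rw [← sum_ite_three n hn (fun i : Fin (n+1) => if (i : ℕ) = 0 then r else
            if (i : ℕ) = 1 then s else ε), Finset.mul_sum, ← Finset.sum_add_distrib]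
        refine Finset.sum_congr rfl fun i _ => ?_
        split_ifs <;> first | omega | tauto
      rw [key2, hxsum]
      omega
    · dsimp only
      rw [if_neg (by rw [hlast]; omega : ¬((Fin.last n : Fin (n+1)) : ℕ) = 0),
        if_neg (by rw [hlast]; omega : ¬((Fin.last n : Fin (n+1)) : ℕ) = 1),
        if_pos hlast]
      omega
    · dsimp only
      rw [if_pos h0]
      omega
  · -- left inverse
    intro m hm
    rw [Finset.mem_filter] at hm
    obtain ⟨hbox, ⟨hsum, hpar⟩, h0r⟩ := hm
    have hm1 : m 1 % 2 = s := by
      have hk := key m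
      rw [hsum, h0r, hpar] at hk
      have hb : m 1 % 2 < 2 := Nat.mod_lt _ (by norm_num)
      omega
    funext i
    dsimp only
    by_cases hi0 : (i : ℕ) = 0
    · have hmi : m i % 2 = r := by
        rw [show i = (0 : Fin (n + 1)) from Fin.ext (by rw [hi0, h0])]; exact h0r
      rw [if_pos hi0, if_pos (Or.inl hi0 : (i:ℕ) = 0 ∨ (i:ℕ) = 1 ∨ (i:ℕ) = n)]
      omega
    · by_cases hi1 : (i : ℕ) = 1
      · have hmi : m i % 2 = s := by
          rw [show i = (1 : Fin (n + 1)) from Fin.ext (by rw [hi1, h1])]; exact hm1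
        rw [if_neg hi0, if_pos hi1,
          if_pos (Or.inr (Or.inl hi1) : (i:ℕ) = 0 ∨ (i:ℕ) = 1 ∨ (i:ℕ) = n)]
        omega
      · by_cases hin : (i : ℕ) = n
        · have hmi : m i % 2 = ε := by
            rw [show i = Fin.last n from Fin.ext (by rw [hin, hlast])]; exact hpar
          rw [if_neg hi0, if_neg hi1, if_pos hin,
            if_pos (Or.inr (Or.inr hin) : (i:ℕ) = 0 ∨ (i:ℕ) = 1 ∨ (i:ℕ) = n)]
          omega
        · rw [if_neg hi0, if_neg hi1, if_neg hin,
            if_neg (by tauto : ¬((i:ℕ) = 0 ∨ (i:ℕ) = 1 ∨ (i:ℕ) = n))]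
  · -- right inverse
    intro x hx
    funext i
    dsimp only
    by_cases hi0 : (i : ℕ) = 0
    · rw [if_pos (Or.inl hi0), if_pos hi0]
      omega
    · by_cases hi1 : (i : ℕ) = 1
      · rw [if_pos (Or.inr (Or.inl hi1)), if_neg hi0, if_pos hi1]
        omega
      · by_cases hin : (i : ℕ) = n
        · rw [if_pos (Or.inr (Or.inr hin)), if_neg hi0, if_neg hi1, if_pos hin]
          omega
        · rw [if_neg (by tauto), if_neg hi0, if_neg hi1, if_neg hin]

/-- **Number of dominant maximal weights in type `B_n^(1)`.**
For `n ≥ 3`, `ε ∈ {0,1}` and `ℓ ≥ 1 + ε`, the number of `(n+1)`-tuples `m` of nonnegative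
integers with `m_0 + m_1 + 2(m_2 + ⋯ + m_{n-1}) + m_n = ℓ` and `m_n ≡ ε (mod 2)` equals
`C(n + ⌊(ℓ-ε)/2⌋, n) + C(n + ⌊(ℓ-1-ε)/2⌋, n)`. -/
theorem stmt_13 (n ℓ ε : ℕ) (hn : 3 ≤ n) (hε : ε ≤ 1) (hℓ : 1 + ε ≤ ℓ) :
    (((Fintype.piFinset fun _ : Fin (n + 1) => Finset.range (ℓ + 1)).filter
        (fun m =>
          (∑ i : Fin (n + 1),
            (if (i : ℕ) = 0 ∨ (i : ℕ) = 1 ∨ (i : ℕ) = n then 1 else 2) * m i = ℓ)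
          ∧ m (Fin.last n) % 2 = ε)).card)
      = Nat.choose (n + (ℓ - ε) / 2) n + Nat.choose (n + (ℓ - 1 - ε) / 2) n := by
  classical
  rw [← Finset.card_filter_add_card_filter_not (fun m : Fin (n + 1) → ℕ => m 0 % 2 = 0),
    Finset.filter_filter, Finset.filter_filter]
  have hcong : ((Fintype.piFinset fun _ : Fin (n + 1) => Finset.range (ℓ + 1)).filter
      (fun m => (((∑ i : Fin (n + 1),
          (if (i : ℕ) = 0 ∨ (i : ℕ) = 1 ∨ (i : ℕ) = n then 1 else 2) * m i = ℓ)
        ∧ m (Fin.last n) % 2 = ε) ∧ ¬ m 0 % 2 = 0)))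
      = ((Fintype.piFinset fun _ : Fin (n + 1) => Finset.range (ℓ + 1)).filter
      (fun m => (((∑ i : Fin (n + 1),
          (if (i : ℕ) = 0 ∨ (i : ℕ) = 1 ∨ (i : ℕ) = n then 1 else 2) * m i = ℓ)
        ∧ m (Fin.last n) % 2 = ε) ∧ m 0 % 2 = 1))) := by
    apply Finset.filter_congr
    intro m _
    constructor <;> rintro ⟨h, h'⟩ <;> exact ⟨h, by omega⟩
  have h : ℓ - ε - 0 = ℓ - ε := by omega
  have h' : ℓ - ε - 1 = ℓ - 1 - ε := by omega
  have h02 : ε + 0 ≤ ℓ := by omega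
  have h12 : ε + 1 ≤ ℓ := by omega
  have e1 := count_parity n ℓ ε 0 hn hε (Nat.zero_le 1) h02
  have e2 := count_parity n ℓ ε 1 hn hε (le_refl 1) h12
  rw [hcong, e1, e2, h, h']
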